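/- Let G be a graph and v a vertex of G. Then reg(G) ≤ max{reg(G − v), reg(G − N_G[v]) + 1}, where reg(G) denotes the Castelnuovo–Mumford regularity of the independence complex of G. -/

import Mathlib

open scoped Classical

noncomputable section

/-! ## Simplicial complexes and Castelnuovo–Mumford regularity -/

/-- A (abstract) simplicial complex on the vertex type `V`, given as a
downward closed family of finsets. -/
def IsComplex {V : Type} (Δ : Finset V → Prop) : Prop :=
  ∀ ⦃F G : Finset V⦄, Δ F → G ⊆ F → Δ G

/-- The faces of cardinality `n` of a family `Δ` (faces of card `n` are the
`(n-1)`-dimensional simplices). -/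
def Faces {V : Type} (Δ : Finset V → Prop) (n : ℕ) : Type :=
  {F : Finset V // Δ F ∧ F.card = n}

/-- The simplicial boundary map of the (augmented) chain complex of `Δ` over
a field `k`, from chains on faces of card `n+1` to chains on faces of card `n`,
with signs determined by a linear order on the vertices. -/
def cxBoundary {V : Type} (k : Type) [Field k] [LinearOrder V]
    (Δ : Finset V → Prop) (n : ℕ) :
    (Faces Δ (n + 1) →₀ k) →ₗ[k] (Faces Δ n →₀ k) :=
  Finsupp.lsum k fun F => LinearMap.toSpanSingleton k _
    (∑ x ∈ F.1.attach,
      ((-1 : k) ^ (F.1.filter (fun z => z < x.1)).card) •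
        (if h : Δ (F.1.erase x.1) ∧ (F.1.erase x.1).card = n then
          Finsupp.single (⟨F.1.erase x.1, h⟩ : Faces Δ n) (1 : k) else 0))

/-- Cycles in chain degree `j` (faces of card `j`); in the bottom degree every
chain is a cycle (augmented complex). -/
def cxCycles {V : Type} (k : Type) [Field k] [LinearOrder V]
    (Δ : Finset V → Prop) : (j : ℕ) → Submodule k (Faces Δ j →₀ k)
  | 0 => ⊤
  | (n + 1) => LinearMap.ker (cxBoundary k Δ n)

/-- Nonvanishing of the reduced homology `H̃_{j-1}(Δ; k)`: there is a cycle
supported on faces of cardinality `j` that is not a boundary. -/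
def HNontrivial {V : Type} (k : Type) [Field k] [LinearOrder V]
    (Δ : Finset V → Prop) (j : ℕ) : Prop :=
  ¬ (cxCycles k Δ j ≤ LinearMap.range (cxBoundary k Δ j))

/-- The induced subcomplex `Δ[S]` on a set `S` of vertices. -/
def restrictC {V : Type} (Δ : Finset V → Prop) (S : Set V) : Finset V → Prop :=
  fun F => ↑F ⊆ S ∧ Δ F

/-- The Castelnuovo–Mumford regularity of `Δ` over the field `k`:
the largest `j` such that `H̃_{j-1}(Δ[S]; k) ≠ 0` for some subset `S` of the
vertices. -/
def regC {V : Type} [Fintype V] (k : Type) [Field k] (Δ : Finset V → Prop) : ℕ :=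
  letI : LinearOrder V :=
    LinearOrder.lift' (Fintype.equivFin V) (Fintype.equivFin V).injective
  sSup {j : ℕ | ∃ S : Set V, HNontrivial k (restrictC Δ S) j}

/-- The deletion `del_Δ(x)`. -/
def delC {V : Type} (Δ : Finset V → Prop) (x : V) : Finset V → Prop :=
  fun F => Δ F ∧ x ∉ F

/-- The link `lk_Δ(x)`. -/
def lkC {V : Type} (Δ : Finset V → Prop) (x : V) : Finset V → Prop :=
  fun F => x ∉ F ∧ Δ (insert x F)

/-! ## Independence complexes and regularity of graphs -/

/-- The independence complex of a graph, as a family of finsets. -/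
def indepFaces {V : Type} (G : SimpleGraph V) : Finset V → Prop :=
  fun F => ∀ u ∈ F, ∀ v ∈ F, ¬ G.Adj u v

/-- The regularity `reg(G)` of a graph: the regularity of its independence
complex over `k`. -/
def gReg {V : Type} [Fintype V] (k : Type) [Field k] (G : SimpleGraph V) : ℕ :=
  regC k (indepFaces G)

/-- The regularity of the subgraph of `G` induced on the vertex set `S`. -/
def gRegOn {V : Type} [Fintype V] (k : Type) [Field k] (G : SimpleGraph V)
    (S : Set V) : ℕ :=
  regC k (restrictC (indepFaces G) S)

/-! ## Geometric realization, suspension, wedge -/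

/-- The geometric realization of a family of finsets `Δ` on a finite vertex
type: convex combinations of vertices supported on a face. -/
abbrev cxSpace {V : Type} [Fintype V] (Δ : Finset V → Prop) : Type :=
  {f : V → ℝ // (∃ F : Finset V, Δ F ∧ ∀ v, f v ≠ 0 → v ∈ F) ∧
    (∀ v, 0 ≤ f v) ∧ ∑ v, f v = 1}

/-- Relation generating the unreduced suspension: the two ends of the cylinder
are collapsed to two (always present) poles. -/
def suspRel (X : Type) : (X × unitInterval ⊕ Bool) → (X × unitInterval ⊕ Bool) → Prop
  | Sum.inl (x, t), Sum.inr b => (t = 0 ∧ b = false) ∨ (t = 1 ∧ b = true)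
  | _, _ => False

/-- The unreduced suspension `Σ X` (the join of `X` with a two-point space). -/
abbrev Susp (X : Type) [TopologicalSpace X] : Type := Quot (suspRel X)

/-- Relation generating the wedge sum with respect to chosen basepoints. -/
def wedgeRel (X Y : Type) (x₀ : X) (y₀ : Y) : X ⊕ Y → X ⊕ Y → Prop :=
  fun p q => p = Sum.inl x₀ ∧ q = Sum.inr y₀

/-- The wedge sum `X ∨ Y` with respect to chosen basepoints. -/
abbrev Wedge (X Y : Type) [TopologicalSpace X] [TopologicalSpace Y]
    (x₀ : X) (y₀ : Y) : Type := Quot (wedgeRel X Y x₀ y₀)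

/-! ## Graph invariants -/

/-- `M` is an induced matching of `G`: a set of edges, pairwise with distinct
endpoints and with no edge of `G` between the endpoints of distinct members. -/
def IsInducedMatching {V : Type} (G : SimpleGraph V) (M : Finset (V × V)) : Prop :=
  (∀ p ∈ M, G.Adj p.1 p.2) ∧
    ∀ p ∈ M, ∀ q ∈ M, p ≠ q →
      p.1 ≠ q.1 ∧ p.1 ≠ q.2 ∧ p.2 ≠ q.1 ∧ p.2 ≠ q.2 ∧
      ¬ G.Adj p.1 q.1 ∧ ¬ G.Adj p.1 q.2 ∧ ¬ G.Adj p.2 q.1 ∧ ¬ G.Adj p.2 q.2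

/-- The induced matching number `im(G)`. -/
def inducedMatchingNumber {V : Type} (G : SimpleGraph V) : ℕ :=
  sSup {n : ℕ | ∃ M : Finset (V × V), IsInducedMatching G M ∧ M.card = n}

/-- The independence number `α(G)`. -/
def indepNumber {V : Type} (G : SimpleGraph V) : ℕ :=
  sSup {n : ℕ | ∃ s : Finset V, (∀ u ∈ s, ∀ v ∈ s, ¬ G.Adj u v) ∧ s.card = n}

/-- The decycling number `∇(G)`: the least size of a set of vertices whose
removal leaves an acyclic graph. -/
def decyclingNumber {V : Type} [Fintype V] (G : SimpleGraph V) : ℕ :=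
  sInf {n : ℕ | ∃ D : Finset V, D.card = n ∧
    (G.induce {v : V | v ∉ D}).IsAcyclic}

/-- `K` contains an induced cycle on `n` vertices. -/
def HasInducedCycle {V : Type} (K : SimpleGraph V) (n : ℕ) : Prop :=
  ∃ f : Fin n ↪ V, ∀ i j : Fin n,
    K.Adj (f i) (f j) ↔ ((j : ℕ) = ((i : ℕ) + 1) % n ∨ (i : ℕ) = ((j : ℕ) + 1) % n)

/-- A graph is cochordal if its complement is chordal, i.e. the complement has
no induced cycle of length at least `4`. -/
def Cochordal {V : Type} (H : SimpleGraph V) : Prop :=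
  ∀ n : ℕ, 4 ≤ n → ¬ HasInducedCycle Hᶜ n

/-- The cochordal cover number `cochord(G)`: the least number of cochordal
subgraphs of `G` whose edge sets cover the edges of `G`. -/
def cochordCover {V : Type} (G : SimpleGraph V) : ℕ :=
  sInf {r : ℕ | ∃ H : Fin r → SimpleGraph V,
    (∀ i, H i ≤ G ∧ Cochordal (H i)) ∧ ∀ u v, G.Adj u v → ∃ i, (H i).Adj u v}

/-- The graph `G*` on the edge set of `G`: two edges are adjacent iff the
subgraph induced by their endpoints is `2K₂` (disjoint, with no cross edges). -/
def starGraph {V : Type} (G : SimpleGraph V) : SimpleGraph G.edgeSet :=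
  SimpleGraph.fromRel fun e f =>
    ∀ a ∈ (e.1 : Sym2 V), ∀ b ∈ (f.1 : Sym2 V), a ≠ b ∧ ¬ G.Adj a b

/-- The chromatic number, as a natural number. -/
def chromNum {W : Type} (H : SimpleGraph W) : ℕ :=
  sInf {n : ℕ | ∃ c : W → Fin n, ∀ u v, H.Adj u v → c u ≠ c v}

/-- The clique number `ω`. -/
def cliqueNum {W : Type} (H : SimpleGraph W) : ℕ :=
  sSup {n : ℕ | ∃ s : Finset W, H.IsNClique n s}

/-- A graph is perfect if every induced subgraph has chromatic number equal to
its clique number. -/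
def IsPerfect {W : Type} (H : SimpleGraph W) : Prop :=
  ∀ A : Set W, chromNum (H.induce A) = cliqueNum (H.induce A)

/-! ## Lozin transform, triple subdivision, whiskers -/

/-- Generating relation for the Lozin transform `L_x(G; Y, Z)`: delete `x`,
add the path `y(=0) - a(=1) - b(=2) - z(=3)` on four new vertices, join `y`
to every vertex of `Y` and `z` to every vertex of `Z`. -/
def lozinRel {V : Type} (G : SimpleGraph V) (x : V) (Y Z : Set V) :
    ({w : V // w ≠ x} ⊕ Fin 4) → ({w : V // w ≠ x} ⊕ Fin 4) → Prop
  | Sum.inl u, Sum.inl w => G.Adj u.1 w.1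
  | Sum.inl u, Sum.inr i => (i = 0 ∧ u.1 ∈ Y) ∨ (i = 3 ∧ u.1 ∈ Z)
  | Sum.inr i, Sum.inr j => (i : ℕ) + 1 = (j : ℕ)
  | _, _ => False

/-- The Lozin transform `L_x(G; Y, Z)` of `G` at the vertex `x`. -/
def lozinModel {V : Type} (G : SimpleGraph V) (x : V) (Y Z : Set V) :
    SimpleGraph ({w : V // w ≠ x} ⊕ Fin 4) :=
  SimpleGraph.fromRel (lozinRel G x Y Z)

/-- `{Y, Z}` is a partition of the open neighborhood of `x`. -/
def IsLozinPartition {V : Type} (G : SimpleGraph V) (x : V) (Y Z : Set V) : Prop :=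
  Y ∪ Z = G.neighborSet x ∧ Disjoint Y Z

/-- Generating relation for the triple subdivision of the edge `(u,v)`:
the edge `uv` is removed and replaced by the path `u - y(=0) - a(=1) - b(=2) - v`. -/
def tripleSubRel {V : Type} (G : SimpleGraph V) (u v : V) :
    (V ⊕ Fin 3) → (V ⊕ Fin 3) → Prop
  | Sum.inl a, Sum.inl b => G.Adj a b ∧ ¬(a = u ∧ b = v) ∧ ¬(a = v ∧ b = u)
  | Sum.inl a, Sum.inr i => (a = u ∧ i = 0) ∨ (a = v ∧ i = 2)
  | Sum.inr i, Sum.inr j => (i : ℕ) + 1 = (j : ℕ)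
  | _, _ => False

/-- The triple subdivision `L(G; e)` of `G` at the edge `e = (u,v)`. -/
def tripleSub {V : Type} (G : SimpleGraph V) (u v : V) : SimpleGraph (V ⊕ Fin 3) :=
  SimpleGraph.fromRel (tripleSubRel G u v)

/-- Generating relation for the whisker `W_S(G)`: attach a new pendant vertex
to each vertex of `S`. -/
def whiskerSRel {V : Type} (G : SimpleGraph V) (S : Finset V) :
    (V ⊕ {s : V // s ∈ S}) → (V ⊕ {s : V // s ∈ S}) → Prop
  | Sum.inl a, Sum.inl b => G.Adj a b
  | Sum.inl a, Sum.inr s => a = s.1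
  | _, _ => False

/-- The whisker graph `W_S(G)` on `V ⊕ S`. -/
def whiskerS {V : Type} (G : SimpleGraph V) (S : Finset V) :
    SimpleGraph (V ⊕ {s : V // s ∈ S}) :=
  SimpleGraph.fromRel (whiskerSRel G S)

/-- Generating relation for the full whisker `W(G)`: attach a pendant vertex
to every vertex. -/
def whiskerRel {V : Type} (G : SimpleGraph V) : (V ⊕ V) → (V ⊕ V) → Prop
  | Sum.inl a, Sum.inl b => G.Adj a b
  | Sum.inl a, Sum.inr b => a = b
  | _, _ => False

/-- The full whisker graph `W(G)` on `V ⊕ V`. -/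
def whiskerGraph {V : Type} (G : SimpleGraph V) : SimpleGraph (V ⊕ V) :=
  SimpleGraph.fromRel (whiskerRel G)

/-! ## Vertex decomposability -/

/-- The closed neighborhood of `x` inside the finset `A`. -/
def closedNbrOn {V : Type} (G : SimpleGraph V) (A : Finset V) (x : V) : Finset V :=
  A.filter fun z => z = x ∨ G.Adj x z

/-- `T` is an independent set of `G`. -/
def IsIndepFinset {V : Type} (G : SimpleGraph V) (T : Finset V) : Prop :=
  ∀ u ∈ T, ∀ v ∈ T, ¬ G.Adj u v

/-- `x` is a shedding vertex of the induced subgraph `G[A]`. -/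
def IsSheddingOn {V : Type} (G : SimpleGraph V) (A : Finset V) (x : V) : Prop :=
  ∀ T ⊆ A \ closedNbrOn G A x, IsIndepFinset G T →
    ∃ w ∈ A, G.Adj x w ∧ IsIndepFinset G (insert w T)

/-- Vertex decomposability of the induced subgraph `G[A]`. -/
def VDOn {V : Type} (G : SimpleGraph V) : Finset V → Prop := fun A =>
  (∀ u ∈ A, ∀ v ∈ A, ¬ G.Adj u v) ∨
    ∃ x : {y : V // y ∈ A}, IsSheddingOn G A x.1 ∧
      VDOn G (A.erase x.1) ∧ VDOn G (A \ closedNbrOn G A x.1)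
termination_by A => A.card
decreasing_by
  · exact Finset.card_erase_lt_of_mem x.2
  · refine Finset.card_lt_card ?_
    refine (Finset.ssubset_iff_of_subset Finset.sdiff_subset).2 ⟨x.1, x.2, ?_⟩
    simp [closedNbrOn, x.2]

end
set_option linter.unusedVariables false
set_option linter.unusedSectionVars false

noncomputable section CoreAux

open Finset

variable {V : Type} [LinearOrder V] (k : Type) [Field k]

lemma insert_irrel (i j : DecidableEq V) (w : V) (s : Finset V) :
    @insert V (Finset V) (@Finset.instInsert V i) w s =
      @insert V (Finset V) (@Finset.instInsert V j) w s := by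
  congr!

lemma lkC_iff (Δ : Finset V → Prop) (w : V) (F : Finset V) :
    lkC Δ w F ↔ w ∉ F ∧ Δ (insert w F) :=
  and_congr_right fun _ => iff_of_eq (congrArg Δ (insert_irrel _ _ _ _))

lemma cxBoundary_single (Δ : Finset V → Prop) (n : ℕ) (F : Faces Δ (n + 1)) (b : k) :
    cxBoundary k Δ n (Finsupp.single F b) =
      b • ∑ y ∈ F.1, ((-1 : k) ^ (F.1.filter (fun z => z < y)).card) •
        (if h : Δ (F.1.erase y) ∧ (F.1.erase y).card = n then
          Finsupp.single (⟨F.1.erase y, h⟩ : Faces Δ n) (1 : k) else 0) := by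
  simp only [cxBoundary, Finsupp.coe_lsum]
  rw [Finsupp.sum_single_index]
  · exact congrArg (fun s => b • s) (Finset.sum_attach F.1 fun y =>
      ((-1 : k) ^ (F.1.filter (fun z => z < y)).card) •
        (if h : Δ (F.1.erase y) ∧ (F.1.erase y).card = n then
          Finsupp.single (⟨F.1.erase y, h⟩ : Faces Δ n) (1 : k) else 0))
  · simp

variable {Δ : Finset V → Prop}

lemma faces_lk_insert {w : V} {n : ℕ} (F : Faces (lkC Δ w) n) : Δ (insert w F.1) :=
  ((lkC_iff Δ w F.1).1 F.2.1).2

/-- inclusion of the deletion into `Δ`, on faces. -/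
def dF (w : V) (n : ℕ) (F : Faces (delC Δ w) n) : Faces Δ n := ⟨F.1, F.2.1.1, F.2.2⟩

/-- inclusion of the link into the deletion, on faces. -/
def lF (hΔ : IsComplex Δ) (w : V) (n : ℕ) (F : Faces (lkC Δ w) n) :
    Faces (delC Δ w) n :=
  ⟨F.1, ⟨hΔ (faces_lk_insert F) (Finset.subset_insert _ _), F.2.1.1⟩, F.2.2⟩

/-- insertion of the cone vertex, on faces of the link. -/
def insF (w : V) (n : ℕ) (F : Faces (lkC Δ w) n) : Faces Δ (n + 1) :=
  ⟨insert w F.1, faces_lk_insert F,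
    by rw [Finset.card_insert_of_notMem F.2.1.1, F.2.2]⟩

variable (Δ)

def iDm (w : V) (n : ℕ) : (Faces (delC Δ w) n →₀ k) →ₗ[k] (Faces Δ n →₀ k) :=
  Finsupp.lmapDomain k k (dF w n)

def psiM (hΔ : IsComplex Δ) (w : V) (n : ℕ) :
    (Faces (lkC Δ w) n →₀ k) →ₗ[k] (Faces (delC Δ w) n →₀ k) :=
  Finsupp.lmapDomain k k (lF hΔ w n)

/-- sign of a vertex relative to a finset -/
def sgn (w : V) (S : Finset V) : k := (-1) ^ ((S.filter fun z => z < w).card)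

lemma sgn_mul_self (w : V) (S : Finset V) : sgn k w S * sgn k w S = 1 := by
  rw [sgn, ← pow_add]
  exact Even.neg_one_pow ⟨_, rfl⟩

def phiM (w : V) (n : ℕ) : (Faces (lkC Δ w) n →₀ k) →ₗ[k] (Faces Δ (n + 1) →₀ k) :=
  Finsupp.lsum k fun F => LinearMap.toSpanSingleton k _
    (sgn k w F.1 • Finsupp.single (insF w n F) 1)

lemma iDm_single (w : V) (n : ℕ) (F : Faces (delC Δ w) n) (b : k) :
    iDm k Δ w n (Finsupp.single F b) = Finsupp.single (dF w n F) b := by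
  simp [iDm, Finsupp.lmapDomain_apply, Finsupp.mapDomain_single]

lemma psiM_single (hΔ : IsComplex Δ) (w : V) (n : ℕ) (F : Faces (lkC Δ w) n) (b : k) :
    psiM k Δ hΔ w n (Finsupp.single F b) = Finsupp.single (lF hΔ w n F) b := by
  simp [psiM, Finsupp.lmapDomain_apply, Finsupp.mapDomain_single]

lemma phiM_single (w : V) (n : ℕ) (F : Faces (lkC Δ w) n) (b : k) :
    phiM k Δ w n (Finsupp.single F b) =
      (b * sgn k w F.1) • Finsupp.single (insF w n F) (1 : k) := by
  rw [phiM, Finsupp.lsum_single, LinearMap.toSpanSingleton_apply, smul_smul]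

def uM (w : V) (n : ℕ) : (Faces Δ n →₀ k) →ₗ[k] (Faces (delC Δ w) n →₀ k) :=
  Finsupp.lsum k fun F => if h : w ∉ F.1 then
    LinearMap.toSpanSingleton k _
      (Finsupp.single (⟨F.1, ⟨F.2.1, h⟩, F.2.2⟩ : Faces (delC Δ w) n) (1 : k))
  else 0

def tM (w : V) (n : ℕ) : (Faces Δ (n + 1) →₀ k) →ₗ[k] (Faces (lkC Δ w) n →₀ k) :=
  Finsupp.lsum k fun F => if h : w ∈ F.1 then
    LinearMap.toSpanSingleton k _
      (sgn k w (F.1.erase w) • Finsupp.single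
        (⟨F.1.erase w, (lkC_iff Δ w _).2 ⟨Finset.notMem_erase _ _, by
            rw [Finset.insert_erase h]; exact F.2.1⟩, by
            simp [Finset.card_erase_of_mem h, F.2.2]⟩ : Faces (lkC Δ w) n) (1 : k))
  else 0

lemma uM_iDm (w : V) (n : ℕ) (a : Faces (delC Δ w) n →₀ k) :
    uM k Δ w n (iDm k Δ w n a) = a := by
  induction a using Finsupp.induction with
  | zero => simp
  | single_add F b f _ _ ih =>
    rw [map_add, map_add, iDm_single, ih]
    congr 1
    erw [uM, Finsupp.lsum_single, dif_pos (show w ∉ (dF w n F).1 from F.2.1.2),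
      LinearMap.toSpanSingleton_apply, Finsupp.smul_single, smul_eq_mul, mul_one]
    exact congrArg (fun G => Finsupp.single G b) (Subtype.ext rfl)

lemma uM_phiM (w : V) (n : ℕ) (b : Faces (lkC Δ w) n →₀ k) :
    uM k Δ w (n + 1) (phiM k Δ w n b) = 0 := by
  induction b using Finsupp.induction with
  | zero => simp
  | single_add F c f _ _ ih =>
    rw [map_add, map_add, phiM_single, map_smul, ih, add_zero]
    rw [uM, Finsupp.lsum_single, dif_neg (by
      simp [insF] : ¬ w ∉ (insF w n F).1)]
    simp

lemma tM_iDm (w : V) (n : ℕ) (a : Faces (delC Δ w) (n + 1) →₀ k) :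
    tM k Δ w n (iDm k Δ w (n + 1) a) = 0 := by
  induction a using Finsupp.induction with
  | zero => simp
  | single_add F b f _ _ ih =>
    rw [map_add, map_add, iDm_single, ih, add_zero]
    rw [tM, Finsupp.lsum_single, dif_neg (show ¬ w ∈ (dF w (n+1) F).1 from F.2.1.2)]
    simp

lemma tM_phiM (w : V) (n : ℕ) (b : Faces (lkC Δ w) n →₀ k) :
    tM k Δ w n (phiM k Δ w n b) = b := by
  induction b using Finsupp.induction with
  | zero => simp
  | single_add F c f _ _ ih =>
    rw [map_add, map_add, ih]
    congr 1
    erw [phiM_single, map_smul, tM, Finsupp.lsum_single,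
      dif_pos (show w ∈ (insF w n F).1 from Finset.mem_insert_self _ _),
      LinearMap.toSpanSingleton_apply, one_smul, smul_smul]
    have he : (insF w n F).1.erase w = F.1 := Finset.erase_insert F.2.1.1
    erw [show sgn k w ((insF w n F).1.erase w) = sgn k w F.1 from by rw [he],
      mul_assoc, sgn_mul_self, mul_one, Finsupp.smul_single, smul_eq_mul, mul_one]
    congr 1
    exact Subtype.ext he

end CoreAux
noncomputable section CoreAux2

open Finset

variable {V : Type} [LinearOrder V] (k : Type) [Field k] {Δ : Finset V → Prop}

lemma boundary_iDm (hΔ : IsComplex Δ) (w : V) (n : ℕ) (a : Faces (delC Δ w) (n + 1) →₀ k) :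
    cxBoundary k Δ n (iDm k Δ w (n + 1) a) = iDm k Δ w n (cxBoundary k (delC Δ w) n a) := by
  induction a using Finsupp.induction with
  | zero => simp
  | single_add F b f _ _ ih =>
    simp only [map_add]
    rw [ih]
    congr 1
    rw [iDm_single, cxBoundary_single, cxBoundary_single]
    erw [map_smul, map_sum]
    congr 1
    refine Finset.sum_congr rfl fun y hy => ?_
    have hyF : y ∈ F.1 := hy
    have hD : delC Δ w (F.1.erase y) ∧ (F.1.erase y).card = n :=
      ⟨⟨hΔ F.2.1.1 (Finset.erase_subset _ _),
        fun hmem => F.2.1.2 (Finset.mem_of_mem_erase hmem)⟩,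
        by simp [Finset.card_erase_of_mem hyF, F.2.2]⟩
    have hT : Δ ((dF w (n+1) F).1.erase y) ∧ ((dF w (n+1) F).1.erase y).card = n :=
      ⟨hD.1.1, hD.2⟩
    erw [dif_pos hT, dif_pos hD, map_smul, iDm_single]
    exact congrArg _ (congrArg (fun G => Finsupp.single G (1 : k)) (Subtype.ext rfl))

lemma boundary_psiM (hΔ : IsComplex Δ) (w : V) (n : ℕ) (a : Faces (lkC Δ w) (n + 1) →₀ k) :
    cxBoundary k (delC Δ w) n (psiM k Δ hΔ w (n + 1) a) =
      psiM k Δ hΔ w n (cxBoundary k (lkC Δ w) n a) := by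
  induction a using Finsupp.induction with
  | zero => simp
  | single_add F b f _ _ ih =>
    simp only [map_add]
    rw [ih]
    congr 1
    rw [psiM_single, cxBoundary_single, cxBoundary_single]
    erw [map_smul, map_sum]
    congr 1
    refine Finset.sum_congr rfl fun y hy => ?_
    have hyF : y ∈ F.1 := hy
    have hL : lkC Δ w (F.1.erase y) ∧ (F.1.erase y).card = n :=
      ⟨(lkC_iff Δ w _).2 ⟨fun hmem => F.2.1.1 (Finset.mem_of_mem_erase hmem),
          hΔ (faces_lk_insert F)
            (Finset.insert_subset_insert _ (Finset.erase_subset _ _))⟩,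
        by simp [Finset.card_erase_of_mem hyF, F.2.2]⟩
    have hT : delC Δ w ((lF hΔ w (n+1) F).1.erase y) ∧
        ((lF hΔ w (n+1) F).1.erase y).card = n :=
      ⟨⟨hΔ ((lF hΔ w (n+1) F).2.1.1) (Finset.erase_subset _ _),
        fun hmem => F.2.1.1 (Finset.mem_of_mem_erase hmem)⟩, hL.2⟩
    erw [dif_pos hT, dif_pos hL, map_smul, psiM_single]
    exact congrArg _ (congrArg (fun G => Finsupp.single G (1 : k)) (Subtype.ext rfl))

lemma sgn_key {w y : V} {s : Finset V} (hw : w ∉ s) (hy : y ∈ s) :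
    sgn k w s * (-1 : k) ^ (((insert w s).filter (fun z => z < y)).card) =
      -((-1 : k) ^ ((s.filter (fun z => z < y)).card) * sgn k w (s.erase y)) := by
  have hne : w ≠ y := fun h => hw (h ▸ hy)
  rw [sgn, sgn, Finset.filter_insert, Finset.filter_erase]
  rcases lt_or_gt_of_ne hne with hlt | hgt
  · rw [if_pos hlt, Finset.card_insert_of_notMem (fun hmem => hw (Finset.mem_of_mem_filter _ hmem)),
      Finset.erase_eq_of_notMem (a := y) (s := s.filter fun z => z < w)
        (fun hmem => absurd (Finset.mem_filter.1 hmem).2 (asymm hlt))]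
    rw [pow_succ]
    ring
  · rw [if_neg (asymm hgt)]
    have hyf : y ∈ s.filter (fun z => z < w) := Finset.mem_filter.2 ⟨hy, hgt⟩
    have hcard : ((s.filter (fun z => z < w)).erase y).card + 1 =
        (s.filter (fun z => z < w)).card := Finset.card_erase_add_one hyf
    rw [← hcard, pow_succ]
    ring

lemma boundary_phiM (hΔ : IsComplex Δ) (w : V) (n : ℕ) (b : Faces (lkC Δ w) (n + 1) →₀ k) :
    cxBoundary k Δ (n + 1) (phiM k Δ w (n + 1) b) =
      iDm k Δ w (n + 1) (psiM k Δ hΔ w (n + 1) b) -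
        phiM k Δ w n (cxBoundary k (lkC Δ w) n b) := by
  induction b using Finsupp.induction with
  | zero => simp
  | single_add F c f _ _ ih =>
    simp only [map_add]
    rw [ih]
    have key : cxBoundary k Δ (n + 1) (phiM k Δ w (n + 1) (Finsupp.single F c)) =
        iDm k Δ w (n + 1) (psiM k Δ hΔ w (n + 1) (Finsupp.single F c)) -
          phiM k Δ w n (cxBoundary k (lkC Δ w) n (Finsupp.single F c)) := by
      rw [phiM_single, psiM_single, iDm_single, cxBoundary_single k (lkC Δ w) n F c]
      simp only [map_smul, map_sum]
      rw [cxBoundary_single, one_smul]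
      erw [show (insF w (n+1) F).1 = insert w F.1 from rfl,
        Finset.sum_insert F.2.1.1, smul_add]
      have hwterm : (c * sgn k w F.1) •
          (((-1 : k) ^ (((insert w F.1).filter (fun z => z < w)).card)) •
            (if h : Δ ((insert w F.1).erase w) ∧ ((insert w F.1).erase w).card = n + 1 then
              Finsupp.single (⟨(insert w F.1).erase w, h⟩ : Faces Δ (n+1)) (1 : k) else 0)) =
          Finsupp.single (dF w (n+1) (lF hΔ w (n+1) F)) c := by
        rw [Finset.filter_insert, if_neg (lt_irrefl w)]
        have hcond : Δ ((insert w F.1).erase w) ∧ ((insert w F.1).erase w).card = n + 1 := by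
          rw [Finset.erase_insert F.2.1.1]
          exact ⟨hΔ (faces_lk_insert F) (Finset.subset_insert _ _), F.2.2⟩
        rw [dif_pos hcond, smul_smul, mul_assoc, ← sgn, sgn_mul_self, mul_one,
          Finsupp.smul_single, smul_eq_mul, mul_one]
        exact congrArg (fun G => Finsupp.single G c) (Subtype.ext (Finset.erase_insert F.2.1.1))
      erw [hwterm, sub_eq_add_neg]
      congr 1
      rw [Finset.smul_sum]
      erw [map_sum]
      refine (@Finset.smul_sum k (Faces Δ (n+1) →₀ k) V _ (Finsupp.distribSMul _ _) _ _ _).trans ?_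
      erw [← Finset.sum_neg_distrib]
      refine Finset.sum_congr rfl fun y hy => ?_
      have hyF : y ∈ F.1 := hy
      have hne : w ≠ y := fun h => F.2.1.1 (h ▸ hyF)
      have hL : lkC Δ w (F.1.erase y) ∧ (F.1.erase y).card = n :=
        ⟨(lkC_iff Δ w _).2 ⟨fun hmem => F.2.1.1 (Finset.mem_of_mem_erase hmem),
            hΔ (faces_lk_insert F)
              (Finset.insert_subset_insert _ (Finset.erase_subset _ _))⟩,
          by simp [Finset.card_erase_of_mem hyF, F.2.2]⟩
      have hcond : Δ ((insert w F.1).erase y) ∧ ((insert w F.1).erase y).card = n + 1 := by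
        rw [Finset.erase_insert_of_ne hne]
        refine ⟨hΔ (faces_lk_insert F)
          (Finset.insert_subset_insert _ (Finset.erase_subset _ _)), ?_⟩
        rw [Finset.card_insert_of_notMem (fun hmem => F.2.1.1 (Finset.mem_of_mem_erase hmem)),
          hL.2]
      erw [dif_pos hcond, dif_pos hL, map_smul, map_smul, phiM_single, one_mul]
      simp only [smul_smul]
      erw [smul_smul]
      have hface : (⟨(insert w F.1).erase y, hcond⟩ : Faces Δ (n+1)) =
          insF w n ⟨F.1.erase y, hL⟩ :=
        Subtype.ext (Finset.erase_insert_of_ne hne)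
      rw [hface, ← neg_smul]
      congr 1
      have hk := sgn_key (k := k) F.2.1.1 hyF
      linear_combination c * hk
    rw [key]
    abel

lemma boundary_phiM0 (hΔ : IsComplex Δ) (w : V) (b : Faces (lkC Δ w) 0 →₀ k) :
    cxBoundary k Δ 0 (phiM k Δ w 0 b) = iDm k Δ w 0 (psiM k Δ hΔ w 0 b) := by
  induction b using Finsupp.induction with
  | zero => simp
  | single_add F c f _ _ ih =>
    simp only [map_add]
    rw [ih]
    congr 1
    have hF : F.1 = (∅ : Finset V) := Finset.card_eq_zero.1 F.2.2
    rw [phiM_single, psiM_single, iDm_single]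
    simp only [map_smul]
    rw [cxBoundary_single, one_smul]
    rw [show (insF w 0 F).1 = insert w F.1 from rfl]
    rw [show (insert w F.1 : Finset V) = {w} from by rw [hF]; rfl]
    rw [Finset.sum_singleton]
    have hcond : Δ (({w} : Finset V).erase w) ∧ (({w} : Finset V).erase w).card = 0 := by
      rw [Finset.erase_singleton]
      exact ⟨hΔ (faces_lk_insert F) (Finset.empty_subset _), Finset.card_empty⟩
    erw [dif_pos hcond, Finset.filter_singleton, if_neg (lt_irrefl w), Finset.card_empty,
      pow_zero, one_smul, show sgn k w F.1 = 1 from by simp [sgn, hF], mul_one,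
      Finsupp.smul_single, smul_eq_mul, mul_one]
    exact congrArg (fun G => Finsupp.single G c)
      (Subtype.ext (show ({w} : Finset V).erase w = F.1 by rw [Finset.erase_singleton, hF]))

end CoreAux2
noncomputable section CoreAux3

open Finset

variable {V : Type} [LinearOrder V] (k : Type) [Field k] {Δ : Finset V → Prop}

/-- the face of the link obtained by removing the cone vertex. -/
def eraseF (w : V) (n : ℕ) (F : Faces Δ (n + 1)) (hw : w ∈ F.1) :
    Faces (lkC Δ w) n :=
  ⟨F.1.erase w, (lkC_iff Δ w _).2 ⟨Finset.notMem_erase _ _,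
      by rw [Finset.insert_erase hw]; exact F.2.1⟩,
    by simp [Finset.card_erase_of_mem hw, F.2.2]⟩

lemma phi_eraseF (w : V) (n : ℕ) (F : Faces Δ (n + 1)) (hw : w ∈ F.1) (c : k) :
    phiM k Δ w n (Finsupp.single (eraseF w n F hw) (sgn k w (F.1.erase w) * c)) =
      Finsupp.single F c := by
  rw [phiM_single,
    show insF w n (eraseF w n F hw) = F from Subtype.ext (Finset.insert_erase hw),
    show sgn k w ((eraseF w n F hw)).1 = sgn k w (F.1.erase w) from rfl,
    show sgn k w (F.1.erase w) * c * sgn k w (F.1.erase w) = c from by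
      rw [mul_comm _ c, mul_assoc, sgn_mul_self, mul_one],
    Finsupp.smul_single, smul_eq_mul, mul_one]

/-- a face avoiding `w`, as a face of the deletion. -/
def dMkF (w : V) (n : ℕ) (F : Faces Δ n) (hw : w ∉ F.1) : Faces (delC Δ w) n :=
  ⟨F.1, ⟨F.2.1, hw⟩, F.2.2⟩

lemma exists_decomp (w : V) (n : ℕ) (z : Faces Δ (n + 1) →₀ k) :
    ∃ a b, z = iDm k Δ w (n + 1) a + phiM k Δ w n b := by
  induction z using Finsupp.induction with
  | zero => exact ⟨0, 0, by simp⟩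
  | single_add F c f _ _ ih =>
    obtain ⟨a, b, hab⟩ := ih
    by_cases hw : w ∈ F.1
    · refine ⟨a, Finsupp.single (eraseF w n F hw) (sgn k w (F.1.erase w) * c) + b, ?_⟩
      rw [map_add, phi_eraseF, hab]
      abel
    · refine ⟨Finsupp.single (dMkF w (n + 1) F hw) c + a, b, ?_⟩
      rw [map_add, iDm_single,
        show dF w (n+1) (dMkF w (n + 1) F hw) = F from Subtype.ext rfl, hab]
      abel

lemma core_lemma (hΔ : IsComplex Δ) (w : V) (hw : Δ {w}) (j : ℕ)
    (h : HNontrivial k Δ j) :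
    HNontrivial k (delC Δ w) j ∨ ∃ m, j = m + 1 ∧ HNontrivial k (lkC Δ w) m := by
  rw [HNontrivial, SetLike.not_le_iff_exists] at h
  obtain ⟨z, hzc, hznb⟩ := h
  match j with
  | 0 =>
    exfalso
    apply hznb
    have he : Δ (∅ : Finset V) := hΔ hw (Finset.empty_subset _)
    have hcond : Δ (({w} : Finset V).erase w) ∧ (({w} : Finset V).erase w).card = 0 := by
      rw [Finset.erase_singleton]; exact ⟨he, Finset.card_empty⟩
    set e0 : Faces Δ 0 := ⟨∅, he, Finset.card_empty⟩ with he0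
    set e1 : Faces Δ 1 := ⟨{w}, hw, Finset.card_singleton _⟩ with he1
    refine LinearMap.mem_range.2 ⟨Finsupp.single e1 (z e0), ?_⟩
    rw [show (cxBoundary k Δ 0) (Finsupp.single e1 (z e0)) =
        (z e0) • ∑ y ∈ e1.1, ((-1 : k) ^ ((e1.1.filter (fun z => z < y)).card)) •
          (if h : Δ (e1.1.erase y) ∧ (e1.1.erase y).card = 0 then
            Finsupp.single (⟨e1.1.erase y, h⟩ : Faces Δ 0) (1 : k) else 0) from
        cxBoundary_single k Δ 0 e1 (z e0),
      show e1.1 = ({w} : Finset V) from rfl, Finset.sum_singleton, dif_pos hcond,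
      Finset.filter_singleton, if_neg (lt_irrefl w), Finset.card_empty, pow_zero, one_smul,
      Finsupp.smul_single, smul_eq_mul, mul_one,
      show (⟨({w} : Finset V).erase w, hcond⟩ : Faces Δ 0) = e0 from
        Subtype.ext (Finset.erase_singleton w)]
    ext G
    rw [show G = e0 from Subtype.ext (Finset.card_eq_zero.1 G.2.2)]
    exact Finsupp.single_eq_same
  | m + 1 =>
    have hzker : cxBoundary k Δ m z = 0 := by
      have : z ∈ LinearMap.ker (cxBoundary k Δ m) := hzc
      exact LinearMap.mem_ker.1 this
    obtain ⟨a, b, hab⟩ := exists_decomp k w m z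
    have key : b ∈ cxCycles k (lkC Δ w) m ∧
        cxBoundary k (delC Δ w) m a + psiM k Δ hΔ w m b = 0 := by
      match m with
      | 0 =>
        have h0 : iDm k Δ w 0
            (cxBoundary k (delC Δ w) 0 a + psiM k Δ hΔ w 0 b) = 0 := by
          rw [map_add, ← boundary_iDm k hΔ w 0 a, ← boundary_phiM0 k hΔ w b, ← map_add,
            ← hab, hzker]
        refine ⟨Submodule.mem_top, ?_⟩
        have := congrArg (uM k Δ w 0) h0
        rwa [uM_iDm, map_zero] at this
      | n' + 1 =>
        have hsplit : iDm k Δ w (n' + 1) (cxBoundary k (delC Δ w) (n' + 1) a) +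
            (iDm k Δ w (n' + 1) (psiM k Δ hΔ w (n' + 1) b) -
              phiM k Δ w n' (cxBoundary k (lkC Δ w) n' b)) = 0 := by
          rw [← boundary_iDm k hΔ w (n' + 1) a, ← boundary_phiM k hΔ w n' b, ← map_add,
            ← hab, hzker]
        have hb0 : cxBoundary k (lkC Δ w) n' b = 0 := by
          have := congrArg (tM k Δ w n') hsplit
          simp only [map_add, map_sub, map_zero, tM_iDm, tM_phiM, zero_add, zero_sub,
            neg_eq_zero] at this
          exact this
        refine ⟨LinearMap.mem_ker.2 hb0, ?_⟩
        have := congrArg (uM k Δ w (n' + 1)) hsplit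
        simp only [map_add, map_sub, map_zero, uM_iDm, uM_phiM, sub_zero] at this
        exact this
    obtain ⟨hbcyc, heq2⟩ := key
    by_cases hbr : b ∈ LinearMap.range (cxBoundary k (lkC Δ w) m)
    · -- b is a boundary of the link; produce a nontrivial cycle of the deletion
      obtain ⟨c₀, hc₀⟩ := hbr
      set c : Faces (lkC Δ w) (m + 1) →₀ k := -c₀ with hcdef
      have hc : cxBoundary k (lkC Δ w) m c = -b := by rw [hcdef, map_neg, hc₀]
      set a' := a - psiM k Δ hΔ w (m + 1) c with ha'
      left
      rw [HNontrivial, SetLike.not_le_iff_exists]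
      refine ⟨a', ?_, ?_⟩
      · show a' ∈ LinearMap.ker (cxBoundary k (delC Δ w) m)
        rw [LinearMap.mem_ker, ha', map_sub, boundary_psiM, hc, map_neg, sub_neg_eq_add,
          heq2]
      · intro hr
        obtain ⟨d, hd⟩ := LinearMap.mem_range.1 hr
        apply hznb
        refine LinearMap.mem_range.2 ⟨iDm k Δ w (m + 2) d + phiM k Δ w (m + 1) c, ?_⟩
        rw [map_add, boundary_iDm k hΔ w (m + 1) d, hd, boundary_phiM k hΔ w m c, hc,
          hab, ha']
        simp only [map_sub, map_neg]
        abel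
    · right
      refine ⟨m, rfl, ?_⟩
      rw [HNontrivial, SetLike.not_le_iff_exists]
      exact ⟨b, hbcyc, hbr⟩

end CoreAux3
noncomputable section CoreAux4

variable {V : Type} (k : Type) [Field k]

lemma hnontrivial_le_card [Fintype V] [LinearOrder V] (Δ : Finset V → Prop) (j : ℕ)
    (h : HNontrivial k Δ j) : j ≤ Fintype.card V := by
  by_contra hlt
  push_neg at hlt
  apply h
  have hempty : IsEmpty (Faces Δ j) := ⟨fun G => by
    have h1 := Finset.card_le_univ G.1
    have h2 := G.2.2
    omega⟩
  rw [SetLike.le_def]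
  intro z hz
  have hz0 : z = 0 := Finsupp.ext fun G => hempty.elim G
  rw [hz0]
  exact Submodule.zero_mem _

end CoreAux4
/-- For a graph `G` and a vertex `v`,
`reg(G) ≤ max (reg(G - v)) (reg(G - N_G[v]) + 1)`. -/
theorem gReg_le_max_del_link {V : Type} [Fintype V] (k : Type) [Field k]
    (G : SimpleGraph V) (v : V) :
    gReg k G ≤
      max (gRegOn k G {u | u ≠ v}) (gRegOn k G {u | u ≠ v ∧ ¬ G.Adj v u} + 1) := by
  letI : LinearOrder V :=
    LinearOrder.lift' (Fintype.equivFin V) (Fintype.equivFin V).injective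
  have hreg : ∀ Δ : Finset V → Prop, regC k Δ =
      sSup {j : ℕ | ∃ S : Set V, HNontrivial k (restrictC Δ S) j} := fun _ => rfl
  show regC k (indepFaces G) ≤
    max (regC k (restrictC (indepFaces G) {u | u ≠ v}))
      (regC k (restrictC (indepFaces G) {u | u ≠ v ∧ ¬ G.Adj v u}) + 1)
  rw [hreg, hreg, hreg]
  have bdd : ∀ Δ : Finset V → Prop,
      BddAbove {j : ℕ | ∃ S : Set V, HNontrivial k (restrictC Δ S) j} := fun Δ =>
    ⟨Fintype.card V, fun j hj => by
      obtain ⟨S, hS⟩ := hj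
      exact hnontrivial_le_card k _ j hS⟩
  refine csSup_le' ?_
  rintro j ⟨S, hS⟩
  by_cases hv : v ∈ S
  · -- v ∈ S : use the deletion/link decomposition
    have hcx : IsComplex (restrictC (indepFaces G) S) := fun F F' hF hsub =>
      ⟨fun u hu => hF.1 (hsub hu), fun u hu u' hu' => hF.2 u (hsub hu) u' (hsub hu')⟩
    have hwf : restrictC (indepFaces G) S {v} := by
      refine ⟨by simp [hv], fun u hu u' hu' => ?_⟩
      rw [Finset.mem_singleton] at hu hu'
      rw [hu, hu']
      exact G.irrefl
    rcases core_lemma k hcx v hwf j hS with hdel | ⟨m, rfl, hlk⟩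
    · have hpred : delC (restrictC (indepFaces G) S) v =
          restrictC (restrictC (indepFaces G) {u | u ≠ v}) (S \ {v}) := by
        funext F
        apply propext
        constructor
        · rintro ⟨⟨h1, h2⟩, h3⟩
          exact ⟨fun u hu => ⟨h1 hu, fun heq => h3 (heq ▸ hu)⟩,
            fun u hu heq => h3 (heq ▸ hu), h2⟩
        · rintro ⟨h1, h2, h3⟩
          exact ⟨⟨fun u hu => (h1 hu).1, h3⟩, fun hvF => (h1 hvF).2 rfl⟩
      rw [hpred] at hdel
      exact le_trans (le_csSup (bdd _) ⟨_, hdel⟩) (le_max_left _ _)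
    · have hpred : lkC (restrictC (indepFaces G) S) v =
          restrictC (restrictC (indepFaces G) {u | u ≠ v ∧ ¬ G.Adj v u})
            (S ∩ {u | u ≠ v ∧ ¬ G.Adj v u}) := by
        funext F
        apply propext
        rw [lkC_iff]
        constructor
        · rintro ⟨h1, h2, h3⟩
          have hmem : ∀ u ∈ F, u ∈ S ∧ u ≠ v ∧ ¬ G.Adj v u := fun u hu =>
            ⟨h2 (Finset.mem_coe.2 (Finset.mem_insert_of_mem hu)),
             fun heq => h1 (heq ▸ hu),
             h3 v (Finset.mem_insert_self _ _) u (Finset.mem_insert_of_mem hu)⟩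
          exact ⟨fun u hu => ⟨(hmem u hu).1, (hmem u hu).2⟩,
            fun u hu => (hmem u hu).2,
            fun u hu u' hu' => h3 u (Finset.mem_insert_of_mem hu) u'
              (Finset.mem_insert_of_mem hu')⟩
        · rintro ⟨h1, h2, h3⟩
          have hnv : v ∉ F := fun hvF => (h2 hvF).1 rfl
          refine ⟨hnv, ?_, ?_⟩
          · intro u hu
            rcases Finset.mem_insert.1 hu with rfl | huF
            · exact hv
            · exact (h1 huF).1
          · intro u hu u' hu'
            rcases Finset.mem_insert.1 hu with rfl | huF <;>
              rcases Finset.mem_insert.1 hu' with rfl | huF'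
            · exact G.irrefl
            · exact (h2 huF').2
            · exact fun hadj => (h2 huF).2 hadj.symm
            · exact h3 u huF u' huF'
      rw [hpred] at hlk
      exact le_trans (Nat.succ_le_succ (le_csSup (bdd _) ⟨_, hlk⟩)) (le_max_right _ _)
  · -- v ∉ S
    have hpred : restrictC (indepFaces G) S =
        restrictC (restrictC (indepFaces G) {u | u ≠ v}) S := by
      funext F
      apply propext
      constructor
      · rintro ⟨h1, h2⟩
        exact ⟨h1, fun u hu heq => hv (heq ▸ h1 hu), h2⟩
      · rintro ⟨h1, _, h2⟩
        exact ⟨h1, h2⟩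
    rw [hpred] at hS
    exact le_trans (le_csSup (bdd _) ⟨S, hS⟩) (le_max_left _ _)
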